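/- Let M be a commutative additive monoid and a, b ∈ M with a ≤ b ≤ n·b' where b' = a, i.e., a ≤ b ≤ n·a in the algebraic order for some positive integer n. Then sr(b) ≤ sr(a). -/
import Mathlib


/-- `a` satisfies the `n`-stable rank condition in `M`. -/
def SRCond {M : Type*} [AddCommMonoid M] (a : M) (n : ℕ) : Prop :=
  ∀ x y : M, n • a + x = a + y → ∃ e : M, n • a = a + e ∧ e + x = y

/-- The stable rank of `a`: the least positive integer `n` such that `a` satisfies
the `n`-stable rank condition, or `∞` if no such `n` exists. -/
noncomputable def sr {M : Type*} [AddCommMonoid M] (a : M) : ℕ∞ :=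
  sInf {n : ℕ∞ | ∃ m : ℕ, 0 < m ∧ SRCond a m ∧ n = (m : ℕ∞)}

private lemma srcond_key {M : Type*} [AddCommMonoid M] (a z w : M) (m' n' : ℕ)
    (hw : a + z + w = (n' + 1) • a) (h : SRCond a (m' + 1)) :
    SRCond (a + z) (m' + 1) := by
  intro x y hxy
  rw [smul_add] at hxy
  have h1 : (m' + 1) • a + ((m' + 1) • z + x) = a + (z + y) := by
    calc (m' + 1) • a + ((m' + 1) • z + x)
        = (m' + 1) • a + (m' + 1) • z + x := by abel
      _ = a + z + y := hxy
      _ = a + (z + y) := by abel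
  obtain ⟨e₀, he₀, he₀'⟩ := h _ _ h1
  -- star equation
  have star : (n' + (m' + 1)) • a + (m' • z + x) = (n' + 1) • a + y := by
    have t1 : e₀ + ((m' + 1) • z + x) + (a + w) = z + y + (a + w) := by rw [he₀']
    have hl : e₀ + ((m' + 1) • z + x) + (a + w)
        = (n' + (m' + 1)) • a + (m' • z + x) := by
      calc e₀ + ((m' + 1) • z + x) + (a + w)
          = (a + z + w) + (e₀ + (m' • z + x)) := by rw [succ_nsmul z]; abel
        _ = (n' + 1) • a + (e₀ + (m' • z + x)) := by rw [hw]
        _ = n' • a + ((a + e₀) + (m' • z + x)) := by rw [succ_nsmul a]; abel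
        _ = n' • a + ((m' + 1) • a + (m' • z + x)) := by rw [← he₀]
        _ = (n' + (m' + 1)) • a + (m' • z + x) := by rw [add_nsmul a n' (m' + 1)]; abel
    have hr : z + y + (a + w) = (n' + 1) • a + y := by
      calc z + y + (a + w) = (a + z + w) + y := by abel
        _ = (n' + 1) • a + y := by rw [hw]
    rw [← hl, t1, hr]
  -- descending cancellation
  have step : ∀ k : ℕ,
      (k + 1 + (m' + 1)) • a + (m' • z + x) = (k + 1 + 1) • a + y →
      (k + (m' + 1)) • a + (m' • z + x) = (k + 1) • a + y := by
    intro k hk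
    have h2 : (m' + 1) • a + ((k + 1) • a + (m' • z + x)) = a + ((k + 1) • a + y) := by
      calc (m' + 1) • a + ((k + 1) • a + (m' • z + x))
          = (k + 1 + (m' + 1)) • a + (m' • z + x) := by rw [add_nsmul a (k + 1) (m' + 1)]; abel
        _ = (k + 1 + 1) • a + y := hk
        _ = a + ((k + 1) • a + y) := by rw [add_nsmul a (k + 1) 1, one_nsmul]; abel
    obtain ⟨e, he, he'⟩ := h _ _ h2
    calc (k + (m' + 1)) • a + (m' • z + x)
        = k • a + (m' + 1) • a + (m' • z + x) := by rw [add_nsmul a k (m' + 1)]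
      _ = k • a + (a + e) + (m' • z + x) := by rw [he]
      _ = e + ((k + 1) • a + (m' • z + x)) := by rw [succ_nsmul a]; abel
      _ = (k + 1) • a + y := he'
  have desc : ∀ k : ℕ,
      (k + (m' + 1)) • a + (m' • z + x) = (k + 1) • a + y →
      (0 + (m' + 1)) • a + (m' • z + x) = (0 + 1) • a + y := by
    intro k
    induction k with
    | zero => exact id
    | succ k ih => intro hk; exact ih (step k hk)
  have P0 := desc n' star
  have h3 : (m' + 1) • a + (m' • z + x) = a + y := by
    rw [Nat.zero_add, Nat.zero_add, one_nsmul] at P0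
    exact P0
  obtain ⟨e, he, he'⟩ := h _ _ h3
  refine ⟨e + m' • z, ?_, ?_⟩
  · calc (m' + 1) • (a + z) = (m' + 1) • a + (m' + 1) • z := by rw [smul_add]
      _ = (a + e) + (m' + 1) • z := by rw [he]
      _ = (a + z) + (e + m' • z) := by rw [succ_nsmul z]; abel
  · calc e + m' • z + x = e + (m' • z + x) := by abel
      _ = y := he'

theorem stmt_8 {M : Type*} [AddCommMonoid M] (a b : M) (n : ℕ) (hn : 0 < n)
    (hab : ∃ z : M, a + z = b) (hbn : ∃ z : M, b + z = n • a) :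
    sr b ≤ sr a := by
  obtain ⟨z, hz⟩ := hab
  obtain ⟨w, hw⟩ := hbn
  subst hz
  obtain ⟨n', rfl⟩ : ∃ n', n = n' + 1 := ⟨n - 1, (Nat.succ_pred_eq_of_pos hn).symm⟩
  apply sInf_le_sInf
  rintro ν ⟨m, hm, hcond, rfl⟩
  obtain ⟨m', rfl⟩ : ∃ m', m = m' + 1 := ⟨m - 1, (Nat.succ_pred_eq_of_pos hm).symm⟩
  exact ⟨m' + 1, hm, srcond_key a z w m' n' hw hcond, rfl⟩
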